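/- Let σ be a partition of the set of all primes, Π a non-empty subset of σ, G a finite group, and A a σ-subnormal subgroup of G. If H ≠ 1 is a Hall Π-subgroup of G and |A| is not a Π'-number (where Π' = σ∖Π), then A ∩ H ≠ 1 and A ∩ H is a Hall Π-subgroup of A. -/

import Mathlib

open Subgroup Pointwise

/-- `σ` is a partition of the set of all primes: every member of every block is prime,
and every prime lies in exactly one block. -/
def IsPrimePartition {ι : Type*} (σ : ι → Set ℕ) : Prop :=
  (∀ i, ∀ p ∈ σ i, Nat.Prime p) ∧ ∀ p : ℕ, Nat.Prime p → ∃! i, p ∈ σ i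

/-- `σ(m)`: the set of indices `i` such that `σ i` contains a prime divisor of `m`. -/
def sigmaClasses {ι : Type*} (σ : ι → Set ℕ) (m : ℕ) : Set ι :=
  {i | ∃ p ∈ σ i, Nat.Prime p ∧ p ∣ m}

/-- A group of order `m` is `σ`-primary iff `m = 1` or `|σ(m)| = 1`. -/
def IsSigmaPrimary {ι : Type*} (σ : ι → Set ℕ) (m : ℕ) : Prop :=
  m = 1 ∨ (sigmaClasses σ m).ncard = 1

/-- `m` is a `Π`-number: every prime divisor of `m` lies in some block belonging to `Π`. -/
def IsPiNumber {ι : Type*} (σ : ι → Set ℕ) (Pi : Set ι) (m : ℕ) : Prop :=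
  ∀ p : ℕ, Nat.Prime p → p ∣ m → ∃ i ∈ Pi, p ∈ σ i

/-- `H` is a Hall `Π`-subgroup of `G`: `|H|` is a `Π`-number and `|G : H|` is a `Π'`-number. -/
def IsHallPiSubgroup {ι : Type*} (σ : ι → Set ℕ) (Pi : Set ι) {G : Type*} [Group G]
    (H : Subgroup G) : Prop :=
  IsPiNumber σ Pi (Nat.card H) ∧ IsPiNumber σ Piᶜ H.index

/-- `A` is `σ`-subnormal in `G`. -/
def IsSigmaSubnormal {ι : Type*} (σ : ι → Set ℕ) {G : Type*} [Group G] (A : Subgroup G) : Prop :=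
  ∃ (t : ℕ) (c : Fin (t + 1) → Subgroup G), Monotone c ∧ c 0 = A ∧ c (Fin.last t) = ⊤ ∧
    ∀ i : Fin t, ((c i.castSucc).subgroupOf (c i.succ)).Normal ∨
      IsSigmaPrimary σ
        (Nat.card (↥(c i.succ) ⧸ ((c i.castSucc).subgroupOf (c i.succ)).normalCore))

/-- `M/N` is a chief factor of `G`. -/
def IsChiefFactor {G : Type*} [Group G] (N M : Subgroup G) : Prop :=
  N.Normal ∧ M.Normal ∧ N < M ∧
    ∀ K : Subgroup G, K.Normal → N ≤ K → K ≤ M → K = N ∨ K = M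

/-- `G` is `σ`-soluble: every chief factor of `G` is `σ`-primary. -/
def IsSigmaSoluble {ι : Type*} (σ : ι → Set ℕ) (G : Type*) [Group G] : Prop :=
  ∀ N M : Subgroup G, IsChiefFactor N M →
    IsSigmaPrimary σ (Nat.card (↥M ⧸ N.subgroupOf M))

/-- `A` is an `n`-maximal subgroup of `G`. -/
def IsNMaximal {G : Type*} [Group G] (n : ℕ) (A : Subgroup G) : Prop :=
  ∃ c : Fin (n + 1) → Subgroup G, Monotone c ∧ c 0 = A ∧ c (Fin.last n) = ⊤ ∧
    ∀ i : Fin n, IsCoatom ((c i.castSucc).subgroupOf (c i.succ))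

/-- `A` is subnormal in `G`. -/
def IsSubnormalSubgroup {G : Type*} [Group G] (A : Subgroup G) : Prop :=
  ∃ (t : ℕ) (c : Fin (t + 1) → Subgroup G), Monotone c ∧ c 0 = A ∧ c (Fin.last t) = ⊤ ∧
    ∀ i : Fin t, ((c i.castSucc).subgroupOf (c i.succ)).Normal

/-- `S` is a complete Hall `σ`-set of `G`. -/
def IsCompleteHallSigmaSet {ι : Type*} (σ : ι → Set ℕ) {G : Type*} [Group G]
    (S : Set (Subgroup G)) : Prop :=
  (∀ H ∈ S, H ≠ ⊥ → ∃ i ∈ sigmaClasses σ (Nat.card G), IsHallPiSubgroup σ {i} H) ∧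
  ∀ i ∈ sigmaClasses σ (Nat.card G), ∃! H, H ∈ S ∧ IsHallPiSubgroup σ {i} H

/-- `G` is `σ`-dispersive. -/
def IsSigmaDispersive {ι : Type*} (σ : ι → Set ℕ) (G : Type*) [Group G] : Prop :=
  ∃ (t : ℕ) (c : Fin (t + 1) → Subgroup G) (H : Fin t → Subgroup G),
    StrictMono c ∧ c 0 = ⊥ ∧ c (Fin.last t) = ⊤ ∧ (∀ i, (c i).Normal) ∧
    IsCompleteHallSigmaSet σ (Set.range H) ∧
    ∀ i : Fin t, (c i.castSucc : Set G) * (H i : Set G) = (c i.succ : Set G)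


-- helper lemmas
lemma piNumber_dvd {ι : Type*} {σ : ι → Set ℕ} {P : Set ι} {m n : ℕ}
    (h : IsPiNumber σ P n) (hd : m ∣ n) : IsPiNumber σ P m :=
  fun p hp hpm => h p hp (hpm.trans hd)

lemma piNumber_both {ι : Type*} {σ : ι → Set ℕ} (hσ : IsPrimePartition σ) {P : Set ι} {m : ℕ}
    (h1 : IsPiNumber σ P m) (h2 : IsPiNumber σ Pᶜ m) : m = 1 := by
  by_contra hm
  obtain ⟨p, hp, hpm⟩ := Nat.exists_prime_and_dvd hm
  obtain ⟨i, hiP, hpi⟩ := h1 p hp hpm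
  obtain ⟨i', hi'P, hpi'⟩ := h2 p hp hpm
  obtain ⟨j, -, hj⟩ := hσ.2 p hp
  exact hi'P ((hj i' hpi').trans (hj i hpi).symm ▸ hiP)

lemma card_subgroupOf_of_le {G : Type*} [Group G] {K A : Subgroup G} (h : K ≤ A) :
    Nat.card (K.subgroupOf A) = Nat.card K :=
  Nat.card_congr (Subgroup.subgroupOfEquivOfLe h).toEquiv

lemma card_mul_relIndex {G : Type*} [Group G] [Finite G] {K A : Subgroup G} (h : K ≤ A) :
    Nat.card K * K.relIndex A = Nat.card A := by
  rw [← card_subgroupOf_of_le h]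
  exact Subgroup.card_mul_index (K.subgroupOf A)

lemma prod_formula {G : Type*} [Group G] [Finite G] (N K : Subgroup G) [N.Normal] :
    Nat.card ↥(K ⊔ N) * Nat.card ↥(N ⊓ K) = Nat.card N * Nat.card K := by
  have e1 : Nat.card ↥(N ⊓ K) * N.relIndex K = Nat.card K := by
    rw [← Subgroup.inf_relIndex_right]; exact card_mul_relIndex inf_le_right
  have e2 : Nat.card N * N.relIndex K = Nat.card ↥(K ⊔ N) := by
    rw [← Subgroup.relIndex_sup_right]; exact card_mul_relIndex le_sup_right
  calc Nat.card ↥(K ⊔ N) * Nat.card ↥(N ⊓ K)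
      = Nat.card N * N.relIndex K * Nat.card ↥(N ⊓ K) := by rw [e2]
    _ = Nat.card N * (Nat.card ↥(N ⊓ K) * N.relIndex K) := by ring
    _ = Nat.card N * Nat.card K := by rw [e1]

lemma dedekind {G : Type*} [Group G] {N A : Subgroup G} (H : Subgroup G) [N.Normal]
    (h : N ≤ A) : N ⊔ (H ⊓ A) = (N ⊔ H) ⊓ A := by
  apply le_antisymm
  · exact sup_le (le_inf le_sup_left h) (le_inf (inf_le_left.trans le_sup_right) inf_le_right)
  · rintro x ⟨hx1, hx2⟩
    have : (x : G) ∈ (↑N * ↑H : Set G) := by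
      rw [← Subgroup.normal_mul]; exact hx1
    obtain ⟨n, hn, h', hh', rfl⟩ := this
    exact mul_mem (Subgroup.mem_sup_left hn)
      (Subgroup.mem_sup_right ⟨hh', by simpa using mul_mem (inv_mem (h hn)) hx2⟩)

lemma one_step {ι : Type*} {σ : ι → Set ℕ} (hσ : IsPrimePartition σ) {Pi : Set ι}
    {G : Type*} [Group G] [Finite G] {A H : Subgroup G}
    (hyp : A.Normal ∨ IsSigmaPrimary σ (Nat.card (G ⧸ A.normalCore)))
    (hH : IsHallPiSubgroup σ Pi H) :
    IsHallPiSubgroup σ Pi ((A ⊓ H).subgroupOf A) := by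
  constructor
  · -- card part: unconditional
    rw [card_subgroupOf_of_le inf_le_left]
    exact piNumber_dvd hH.1 (Subgroup.card_dvd_of_le inf_le_right)
  · -- index part
    have hidx : ((A ⊓ H).subgroupOf A).index = H.relIndex A := by
      show (A ⊓ H).relIndex A = H.relIndex A
      rw [inf_comm, Subgroup.inf_relIndex_right]
    rw [hidx]
    rcases hyp with hn | hp
    · -- A normal: H.relindex A = H.relindex (H ⊔ A) ∣ H.index
      haveI := hn
      have e1 : Nat.card ↥(H ⊓ A) * H.relIndex A = Nat.card A := by
        rw [← Subgroup.inf_relIndex_right]; exact card_mul_relIndex inf_le_right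
      have e2 : Nat.card H * H.relIndex (H ⊔ A) = Nat.card ↥(H ⊔ A) := card_mul_relIndex le_sup_left
      have e3 : Nat.card ↥(H ⊔ A) * Nat.card ↥(A ⊓ H) = Nat.card A * Nat.card H := by
        exact prod_formula A H
      have hpos1 : 0 < Nat.card ↥(H ⊓ A) := Nat.card_pos
      have hpos2 : 0 < Nat.card H := Nat.card_pos
      have key : H.relIndex A = H.relIndex (H ⊔ A) := by
        have : Nat.card H * (Nat.card ↥(H ⊓ A) * H.relIndex A)
            = Nat.card H * (Nat.card ↥(H ⊓ A) * H.relIndex (H ⊔ A)) := by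
          rw [e1]
          calc Nat.card H * Nat.card A = Nat.card A * Nat.card H := by ring
            _ = Nat.card ↥(H ⊔ A) * Nat.card ↥(A ⊓ H) := e3.symm
            _ = Nat.card H * H.relIndex (H ⊔ A) * Nat.card ↥(A ⊓ H) := by rw [e2]
            _ = Nat.card H * (Nat.card ↥(H ⊓ A) * H.relIndex (H ⊔ A)) := by
                rw [inf_comm A H]; ring
        exact Nat.eq_of_mul_eq_mul_left hpos1
          (Nat.eq_of_mul_eq_mul_left hpos2 this)
      rw [key]
      exact piNumber_dvd hH.2 (Subgroup.relIndex_dvd_index_of_le le_sup_left)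
    · -- σ-primary case
      set N := A.normalCore with hN
      have hNA : N ≤ A := Subgroup.normalCore_le A
      have hm : Nat.card (G ⧸ A.normalCore) = N.index := (Subgroup.index_eq_card N).symm
      rcases hp with h1 | hcl
      · -- N = ⊤, so A = ⊤
        have : N = ⊤ := Subgroup.index_eq_one.mp (hm ▸ h1)
        have hA : A = ⊤ := top_le_iff.mp (this ▸ hNA)
        rw [hA, Subgroup.relIndex_top_right]
        exact hH.2
      · obtain ⟨j, hj⟩ := Set.ncard_eq_one.mp hcl
        have hclass : ∀ p : ℕ, Nat.Prime p → p ∣ N.index → p ∈ σ j := by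
          intro p hp hpd
          obtain ⟨i, hpi, hun⟩ := hσ.2 p hp
          have : i ∈ sigmaClasses σ (Nat.card (G ⧸ A.normalCore)) :=
            ⟨p, hpi, hp, hm ▸ hpd⟩
          rw [hj] at this
          exact this ▸ hpi
        by_cases hjPi : j ∈ Pi
        · -- j ∈ Π : G = H ⊔ N and H.relindex A = H.index
          have hPiIdx : IsPiNumber σ Pi N.index := fun p hp hpd => ⟨j, hjPi, hclass p hp hpd⟩
          have htop : H ⊔ N = ⊤ := by
            rw [← Subgroup.index_eq_one]
            refine piNumber_both (P := Pi) hσ ?_ ?_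
            · exact piNumber_dvd hPiIdx (Subgroup.index_dvd_of_le le_sup_right)
            · exact piNumber_dvd hH.2 (Subgroup.index_dvd_of_le le_sup_left)
          have hAeq : (H ⊓ A) ⊔ N = A := by
            have := dedekind (N := N) (A := A) H hNA
            rw [sup_comm, this, sup_comm N H, htop, top_inf_eq]
          -- prod formulas
          have f1 : Nat.card ↥(H ⊔ N) * Nat.card ↥(N ⊓ H) = Nat.card N * Nat.card H :=
            prod_formula N H
          have f2 : Nat.card A * Nat.card ↥(N ⊓ (H ⊓ A)) = Nat.card N * Nat.card ↥(H ⊓ A) := by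
            have := prod_formula N (H ⊓ A); rwa [hAeq] at this
          have hNinf : N ⊓ (H ⊓ A) = N ⊓ H := by
            apply le_antisymm (le_inf inf_le_left (inf_le_right.trans inf_le_left))
            exact le_inf inf_le_left (le_inf inf_le_right (inf_le_left.trans hNA))
          rw [hNinf] at f2
          have htopcard : Nat.card ↥(H ⊔ N) = Nat.card G := by
            rw [htop]; exact Subgroup.card_top
          have e1 : Nat.card ↥(H ⊓ A) * H.relIndex A = Nat.card A := by
            rw [← Subgroup.inf_relIndex_right]; exact card_mul_relIndex inf_le_right
          have e4 : Nat.card H * H.index = Nat.card G := Subgroup.card_mul_index H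
          have hposNH : 0 < Nat.card ↥(N ⊓ H) := Nat.card_pos
          have hposHA : 0 < Nat.card ↥(H ⊓ A) := Nat.card_pos
          have hposH : 0 < Nat.card H := Nat.card_pos
          -- H.relindex A * card (N⊓H) = card N
          have g1 : H.relIndex A * Nat.card ↥(N ⊓ H) = Nat.card N := by
            have : Nat.card ↥(H ⊓ A) * (H.relIndex A * Nat.card ↥(N ⊓ H))
                = Nat.card ↥(H ⊓ A) * Nat.card N := by
              calc Nat.card ↥(H ⊓ A) * (H.relIndex A * Nat.card ↥(N ⊓ H))
                  = (Nat.card ↥(H ⊓ A) * H.relIndex A) * Nat.card ↥(N ⊓ H) := by ring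
                _ = Nat.card A * Nat.card ↥(N ⊓ H) := by rw [e1]
                _ = Nat.card N * Nat.card ↥(H ⊓ A) := f2
                _ = Nat.card ↥(H ⊓ A) * Nat.card N := by ring
            exact Nat.eq_of_mul_eq_mul_left hposHA this
          have g2 : H.index * Nat.card ↥(N ⊓ H) = Nat.card N := by
            have : Nat.card H * (H.index * Nat.card ↥(N ⊓ H))
                = Nat.card H * Nat.card N := by
              calc Nat.card H * (H.index * Nat.card ↥(N ⊓ H))
                  = (Nat.card H * H.index) * Nat.card ↥(N ⊓ H) := by ring
                _ = Nat.card G * Nat.card ↥(N ⊓ H) := by rw [e4]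
                _ = Nat.card ↥(H ⊔ N) * Nat.card ↥(N ⊓ H) := by rw [htopcard]
                _ = Nat.card N * Nat.card H := f1
                _ = Nat.card H * Nat.card N := by ring
            exact Nat.eq_of_mul_eq_mul_left hposH this
          have : H.relIndex A = H.index :=
            Nat.eq_of_mul_eq_mul_right hposNH (g1.trans g2.symm)
          rw [this]; exact hH.2
        · -- j ∉ Π : H ≤ N ≤ A
          have hPi'Idx : IsPiNumber σ Piᶜ N.index := fun p hp hpd => ⟨j, hjPi, hclass p hp hpd⟩
          have hHN : H ≤ N := by
            rw [← Subgroup.relIndex_eq_one]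
            refine piNumber_both (P := Pi) hσ ?_ ?_
            · refine piNumber_dvd hH.1 ?_
              have := card_mul_relIndex (inf_le_right : N ⊓ H ≤ H)
              rw [Subgroup.inf_relIndex_right] at this
              exact Dvd.intro_left _ this
            · exact piNumber_dvd hPi'Idx (Subgroup.relIndex_dvd_index_of_normal N H)
          exact piNumber_dvd hH.2 (Subgroup.relIndex_dvd_index_of_le (hHN.trans hNA))

lemma hall_transfer {ι : Type*} {σ : ι → Set ℕ} {Pi : Set ι}
    {G1 G2 : Type*} [Group G1] [Group G2] {K1 : Subgroup G1} {K2 : Subgroup G2}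
    (hc : Nat.card K1 = Nat.card K2) (hi : K1.index = K2.index)
    (h : IsHallPiSubgroup σ Pi K1) : IsHallPiSubgroup σ Pi K2 :=
  ⟨hc ▸ h.1, hi ▸ h.2⟩

lemma chain_hall {ι : Type*} {σ : ι → Set ℕ} (hσ : IsPrimePartition σ) (Pi : Set ι) :
    ∀ (t : ℕ) {G : Type*} [Group G] [Finite G] (H : Subgroup G)
      (c : Fin (t + 1) → Subgroup G), Monotone c → c (Fin.last t) = ⊤ →
      (∀ i : Fin t, ((c i.castSucc).subgroupOf (c i.succ)).Normal ∨
        IsSigmaPrimary σ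
          (Nat.card (↥(c i.succ) ⧸ ((c i.castSucc).subgroupOf (c i.succ)).normalCore))) →
      IsHallPiSubgroup σ Pi H → IsHallPiSubgroup σ Pi ((c 0 ⊓ H).subgroupOf (c 0)) := by
  intro t
  induction t with
  | zero =>
    intro G _ _ H c hm hlast hstep hH
    have h0 : c 0 = ⊤ := hlast
    rw [h0]
    refine hall_transfer (K1 := H) ?_ ?_ hH
    · rw [top_inf_eq, card_subgroupOf_of_le le_top]
    · show H.index = (⊤ ⊓ H).relIndex ⊤
      rw [top_inf_eq, Subgroup.relIndex_top_right]
  | succ t ih =>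
    intro G _ _ H c hm hlast hstep hH
    set A := c 0 with hA
    set B := c 1 with hB
    have hAB : A ≤ B := hm (Fin.zero_le 1)
    -- shifted chain
    have hBHall : IsHallPiSubgroup σ Pi ((B ⊓ H).subgroupOf B) := by
      have := ih H (fun i => c i.succ) (fun i j hij => hm (Fin.succ_le_succ_iff.mpr hij))
        (by show c (Fin.last t).succ = ⊤; rw [Fin.succ_last]; exact hlast)
        (fun i => by simpa only [Fin.succ_castSucc] using hstep i.succ) hH
      have e : c (Fin.succ 0) = B := by rw [Fin.succ_zero_eq_one]
      beta_reduce at this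
      rw [e] at this
      simpa using this
    have hstep0 := hstep 0
    rw [Fin.castSucc_zero, Fin.succ_zero_eq_one] at hstep0
    have key := one_step (A := A.subgroupOf B) (H := (B ⊓ H).subgroupOf B) hσ hstep0 hBHall
    have einf : A.subgroupOf B ⊓ (B ⊓ H).subgroupOf B = (A ⊓ H).subgroupOf B := by
      have h2 : A ⊓ (B ⊓ H) = A ⊓ H := by rw [← inf_assoc, inf_of_le_left hAB]
      simp only [Subgroup.subgroupOf, ← Subgroup.comap_inf, h2]
    rw [einf] at key
    have hle1 : (A ⊓ H).subgroupOf B ≤ A.subgroupOf B :=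
      Subgroup.comap_mono inf_le_left
    refine hall_transfer ?_ ?_ key
    · rw [card_subgroupOf_of_le hle1, card_subgroupOf_of_le (inf_le_left.trans hAB),
        card_subgroupOf_of_le (inf_le_left : A ⊓ H ≤ A)]
    · show ((A ⊓ H).subgroupOf B).relIndex (A.subgroupOf B) = (A ⊓ H).relIndex A
      exact Subgroup.relIndex_subgroupOf hAB


/-- Let `A` be `σ`-subnormal in `G`. If `H ≠ 1` is a Hall `Π`-subgroup of `G` and `|A|` is not
a `Π'`-number, then `A ∩ H ≠ 1` is a Hall `Π`-subgroup of `A`. -/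
theorem sigmaSubnormal_inf_hall
    {ι : Type*} (σ : ι → Set ℕ) (hσ : IsPrimePartition σ) (Pi : Set ι) (hPi : Pi.Nonempty)
    (G : Type*) [Group G] [Finite G] (A H : Subgroup G)
    (hA : IsSigmaSubnormal σ A)
    (hH : IsHallPiSubgroup σ Pi H) (hHne : H ≠ ⊥)
    (hAnot : ¬ IsPiNumber σ Piᶜ (Nat.card A)) :
    A ⊓ H ≠ ⊥ ∧ IsHallPiSubgroup σ Pi ((A ⊓ H).subgroupOf A) := by
  obtain ⟨t, c, hm, hc0, hlast, hstep⟩ := hA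
  have hall : IsHallPiSubgroup σ Pi ((A ⊓ H).subgroupOf A) := by
    have := chain_hall hσ Pi t H c hm hlast hstep hH
    rwa [hc0] at this
  refine ⟨?_, hall⟩
  -- nontriviality
  rw [IsPiNumber] at hAnot
  push_neg at hAnot
  obtain ⟨p, hp, hpA, hno⟩ := hAnot
  have hcardeq : Nat.card ((A ⊓ H).subgroupOf A) * ((A ⊓ H).subgroupOf A).index
      = Nat.card A := Subgroup.card_mul_index _
  have hpd : p ∣ Nat.card ((A ⊓ H).subgroupOf A) := by
    rcases (Nat.Prime.dvd_mul hp).mp (hcardeq ▸ hpA) with h | h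
    · exact h
    · obtain ⟨i, hi, hpi⟩ := hall.2 p hp h
      exact absurd hpi (hno i hi)
  intro hbot
  rw [card_subgroupOf_of_le inf_le_left, hbot] at hpd
  simp only [Nat.card_eq_fintype_card, Subgroup.card_bot] at hpd
  exact Nat.Prime.one_lt hp |>.ne' (Nat.dvd_one.mp hpd)
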